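/- Let A be a unital C*-algebra, τ : A → ℂ a continuous linear tracial functional (τ(xy) = τ(yx)), and ∂ : A → A a continuous ℂ-linear derivation. Let f ∈ A be self-adjoint with τ( f²·(∂f)·(∂f) − f·(∂f)·f·(∂f) ) ≠ 0, and define Ω_f(t) := ½·τ( (∂ e^{−tf/2})·(∂ e^{tf}) + (∂ e^{tf/2})·(∂ e^{tf})·e^{−tf} ) for t ∈ ℝ. Then there exists δ > 0 such that Ω_f(t) ≠ 0 for every real t with 0 < |t| < δ; i.e., the Gauss–Bonnet theorem fails for the metric diag(e^{tf}, 1) for all sufficiently small nonzero t. -/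

import Mathlib

open NormedSpace

private lemma gb_tail_bound {A : Type*} [NormedRing A] [NormedAlgebra ℂ A] [CompleteSpace A]
    (f : A) :
    ∃ C : ℝ, 0 ≤ C ∧ ∀ s : ℂ, ‖s‖ ≤ 1 →
      ‖exp (s • f) - (1 + s • f + (s^2/2) • (f*f) + (s^3/6) • (f*f*f))‖ ≤ C * ‖s‖^4 := by
  set C : ℝ := ∑' n : ℕ, ‖f‖^(n+4) / (n.factorial : ℝ) with hC
  have hsumf : ∀ x : ℝ, Summable (fun n : ℕ => x^n / n.factorial) := Real.summable_pow_div_factorial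
  have hsumC : Summable (fun n : ℕ => ‖f‖^(n+4) / (n.factorial : ℝ)) := by
    have := (hsumf ‖f‖).mul_left (‖f‖^4)
    refine this.congr (fun n => ?_)
    rw [pow_add]; ring
  have hC0 : 0 ≤ C := tsum_nonneg (fun n => by positivity)
  refine ⟨C, hC0, fun s hs => ?_⟩
  set g : ℕ → A := fun n => ((n.factorial : ℂ)⁻¹ * s^n) • f^n with hg
  have hgs : Summable g := by
    have h := expSeries_summable' (𝕂 := ℂ) (s • f)
    refine h.congr (fun n => ?_)
    rw [smul_pow, smul_smul]
  have hexp : exp (s • f) = ∑' n, g n := by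
    rw [exp_eq_tsum ℂ]
    exact tsum_congr (fun n => by rw [smul_pow, smul_smul])
  have hsplit : (∑ i ∈ Finset.range 4, g i) + ∑' n, g (n + 4) = ∑' n, g n :=
    Summable.sum_add_tsum_nat_add 4 hgs
  have hhead : (∑ i ∈ Finset.range 4, g i) = 1 + s • f + (s^2/2) • (f*f) + (s^3/6) • (f*f*f) := by
    rw [hg]
    rw [Finset.sum_range_succ, Finset.sum_range_succ, Finset.sum_range_succ,
      Finset.sum_range_one]
    norm_num [Nat.factorial, pow_succ, div_eq_mul_inv, mul_comm]
  have key : exp (s • f) - (1 + s • f + (s^2/2) • (f*f) + (s^3/6) • (f*f*f))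
      = ∑' n, g (n + 4) := by
    rw [hexp, ← hsplit, hhead]; abel
  rw [key]
  have hb : ∀ n : ℕ, ‖g (n + 4)‖ ≤ (‖f‖^(n+4) / (n.factorial : ℝ)) * ‖s‖^4 := by
    intro n
    have h1 : ‖g (n+4)‖ ≤ ‖(((n+4).factorial : ℂ)⁻¹ * s^(n+4))‖ * ‖f^(n+4)‖ :=
      _root_.norm_smul_le _ _
    have h2 : ‖f^(n+4)‖ ≤ ‖f‖^(n+4) := norm_pow_le' f (by omega)
    have h3 : ‖(((n+4).factorial : ℂ)⁻¹ * s^(n+4))‖ ≤ ((n.factorial : ℝ))⁻¹ * ‖s‖^4 := by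
      rw [norm_mul, norm_inv, norm_pow]
      have h4 : ‖((n+4).factorial : ℂ)‖ = ((n+4).factorial : ℝ) := by
        simp
      rw [h4]
      apply mul_le_mul
      · apply inv_anti₀ (by positivity)
        exact_mod_cast Nat.factorial_le (by omega)
      · exact pow_le_pow_of_le_one (norm_nonneg s) hs (by omega)
      · positivity
      · positivity
    calc ‖g (n+4)‖ ≤ (((n.factorial : ℝ))⁻¹ * ‖s‖^4) * ‖f‖^(n+4) := by
          refine h1.trans (mul_le_mul h3 h2 (norm_nonneg _) (by positivity))
      _ = (‖f‖^(n+4) / (n.factorial : ℝ)) * ‖s‖^4 := by ring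
  have hsum2 : Summable (fun n => (‖f‖^(n+4) / (n.factorial : ℝ)) * ‖s‖^4) :=
    hsumC.mul_right _
  have hsn4 : Summable (fun n => ‖g (n+4)‖) :=
    Summable.of_nonneg_of_le (fun n => norm_nonneg _) hb hsum2
  have s1 : ‖∑' n, g (n + 4)‖ ≤ ∑' n, ‖g (n+4)‖ := norm_tsum_le_tsum_norm hsn4
  have s2 : ∑' n, ‖g (n+4)‖ ≤ ∑' n, (‖f‖^(n+4) / (n.factorial : ℝ)) * ‖s‖^4 :=
    hsn4.tsum_le_tsum hb hsum2
  have s3 : ∑' n : ℕ, (‖f‖^(n+4) / (n.factorial : ℝ)) * ‖s‖^4 = C * ‖s‖^4 := by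
    rw [tsum_mul_right]
  exact s1.trans (s2.trans_eq s3)

private lemma gb_prod_approx {A : Type*} [NormedRing A] (X P Y Q : A) (e1 e2 M1 M2 : ℝ)
    (h1 : ‖X - P‖ ≤ e1) (h2 : ‖Y - Q‖ ≤ e2) (hP : ‖P‖ ≤ M1) (hQ : ‖Q‖ ≤ M2) :
    ‖X*Y - P*Q‖ ≤ e1*M2 + M1*e2 + e1*e2 := by
  have key : X*Y - P*Q = (X-P)*Q + P*(Y-Q) + (X-P)*(Y-Q) := by noncomm_ring
  have n1 : ‖(X-P)*Q‖ ≤ e1*M2 := (norm_mul_le _ _).trans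
    (mul_le_mul h1 hQ (norm_nonneg _) ((norm_nonneg _).trans h1))
  have n2 : ‖P*(Y-Q)‖ ≤ M1*e2 := (norm_mul_le _ _).trans
    (mul_le_mul hP h2 (norm_nonneg _) ((norm_nonneg _).trans hP))
  have n3 : ‖(X-P)*(Y-Q)‖ ≤ e1*e2 := (norm_mul_le _ _).trans
    (mul_le_mul h1 h2 (norm_nonneg _) ((norm_nonneg _).trans h1))
  rw [key]
  calc ‖(X-P)*Q + P*(Y-Q) + (X-P)*(Y-Q)‖
      ≤ ‖(X-P)*Q + P*(Y-Q)‖ + ‖(X-P)*(Y-Q)‖ := norm_add_le _ _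
    _ ≤ (‖(X-P)*Q‖ + ‖P*(Y-Q)‖) + ‖(X-P)*(Y-Q)‖ := add_le_add_left (norm_add_le _ _) _
    _ ≤ e1*M2 + M1*e2 + e1*e2 := by linarith

private lemma gb_poly3_bound {A : Type*} [NormedRing A] [NormedAlgebra ℂ A]
    (x1 x2 x3 : A) (z : ℂ) (hz : ‖z‖ ≤ 1) :
    ‖x1 + z•x2 + z^2•x3‖ ≤ ‖x1‖ + ‖x2‖ + ‖x3‖ := by
  have h2 : ‖z•x2‖ ≤ ‖x2‖ := by
    rw [norm_smul]; exact mul_le_of_le_one_left (norm_nonneg _) hz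
  have h3 : ‖z^2•x3‖ ≤ ‖x3‖ := by
    rw [norm_smul, norm_pow]
    exact mul_le_of_le_one_left (norm_nonneg _) (pow_le_one₀ (norm_nonneg _) hz)
  calc ‖x1 + z•x2 + z^2•x3‖ ≤ ‖x1 + z•x2‖ + ‖z^2•x3‖ := norm_add_le _ _
    _ ≤ (‖x1‖ + ‖z•x2‖) + ‖z^2•x3‖ := add_le_add_left (norm_add_le _ _) _
    _ ≤ ‖x1‖ + ‖x2‖ + ‖x3‖ := by linarith

private lemma gb_poly4_bound {A : Type*} [NormedRing A] [NormedAlgebra ℂ A]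
    (x0 x1 x2 x3 : A) (z : ℂ) (hz : ‖z‖ ≤ 1) :
    ‖x0 + z•x1 + z^2•x2 + z^3•x3‖ ≤ ‖x0‖ + ‖x1‖ + ‖x2‖ + ‖x3‖ := by
  have h3 : ‖z^3•x3‖ ≤ ‖x3‖ := by
    rw [norm_smul, norm_pow]
    exact mul_le_of_le_one_left (norm_nonneg _) (pow_le_one₀ (norm_nonneg _) hz)
  calc ‖x0 + z•x1 + z^2•x2 + z^3•x3‖ ≤ ‖x0 + z•x1 + z^2•x2‖ + ‖z^3•x3‖ := norm_add_le _ _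
    _ ≤ (‖x0‖ + ‖x1‖ + ‖x2‖) + ‖z^3•x3‖ := add_le_add_left (gb_poly3_bound _ _ _ _ hz) _
    _ ≤ ‖x0‖ + ‖x1‖ + ‖x2‖ + ‖x3‖ := by linarith

private lemma gb_poly_id {A : Type*} [NormedRing A] [NormedAlgebra ℂ A]
    (τ : A →L[ℂ] ℂ) (a1 a2 a3 b1 b2 b3 g1 g2 g3 h1 h2 h3 : A) (z : ℂ) :
    τ (z^2 • ((a1 + z•a2 + z^2•a3) * (b1 + z•b2 + z^2•b3))
      + (z^2 • ((g1 + z•g2 + z^2•g3) * (b1 + z•b2 + z^2•b3))) * ((1:A) + z•h1 + z^2•h2 + z^3•h3))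
    = (τ (a1*b1) + τ (g1*b1)) * z^2
    + (τ (a1*b2) + τ (a2*b1) + τ (g1*b2) + τ (g2*b1) + τ (g1*b1*h1)) * z^3
    + (τ (a1*b3) + τ (a2*b2) + τ (a3*b1) + τ (g1*b3) + τ (g2*b2) + τ (g3*b1)
        + τ (g1*b2*h1) + τ (g2*b1*h1) + τ (g1*b1*h2)) * z^4
    + z^5 * ((τ (a2*b3) + τ (a3*b2) + τ (g2*b3) + τ (g3*b2) + τ (g1*b3*h1) + τ (g2*b2*h1)
        + τ (g3*b1*h1) + τ (g1*b2*h2) + τ (g2*b1*h2) + τ (g1*b1*h3))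
      + (τ (a3*b3) + τ (g3*b3) + τ (g2*b3*h1) + τ (g3*b2*h1) + τ (g1*b3*h2) + τ (g2*b2*h2)
        + τ (g3*b1*h2) + τ (g1*b2*h3) + τ (g2*b1*h3)) * z
      + (τ (g3*b3*h1) + τ (g2*b3*h2) + τ (g3*b2*h2) + τ (g1*b3*h3) + τ (g2*b2*h3)
        + τ (g3*b1*h3)) * z^2
      + (τ (g3*b3*h2) + τ (g2*b3*h3) + τ (g3*b2*h3)) * z^3
      + (τ (g3*b3*h3)) * z^4) := by
  simp only [mul_add, add_mul, mul_one, one_mul, smul_mul_assoc, mul_smul_comm, smul_smul,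
    smul_add, map_add, map_smul, smul_eq_mul]
  ring

private lemma gb_phi1_zero {A : Type*} [NormedRing A] [NormedAlgebra ℂ A]
    (τ : A →L[ℂ] ℂ) (hτ : ∀ x y : A, τ (x * y) = τ (y * x)) (f u v : A)
    (hv : v = u*f + f*u) :
    τ (((-(1:ℂ)/2)•u) * (((1:ℂ)/2)•v)) + τ ((((1:ℂ)/8)•v) * u)
      + τ ((((1:ℂ)/2)•u) * (((1:ℂ)/2)•v)) + τ ((((1:ℂ)/8)•v) * u)
      + τ ((((1:ℂ)/2)•u) * u * (-f)) = 0 := by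
  subst hv
  have e1 : τ (u*(f*u)) = τ (f*(u*u)) := by
    rw [hτ u (f*u)]; simp only [mul_assoc]
  have e2 : τ (u*(u*f)) = τ (f*(u*u)) := by
    rw [hτ u (u*f)]; simp only [mul_assoc]; exact e1
  simp only [mul_add, add_mul, mul_neg, neg_mul, smul_mul_assoc, mul_smul_comm, smul_smul,
    smul_add, map_add, map_smul, map_neg, smul_eq_mul, mul_assoc]
  rw [e1, e2]
  ring

private lemma gb_phi2_val {A : Type*} [NormedRing A] [NormedAlgebra ℂ A]
    (τ : A →L[ℂ] ℂ) (hτ : ∀ x y : A, τ (x * y) = τ (y * x)) (f u v w : A)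
    (hv : v = u*f + f*u) :
    τ (((-(1:ℂ)/2)•u) * (((1:ℂ)/6)•w)) + τ ((((1:ℂ)/8)•v) * (((1:ℂ)/2)•v))
      + τ (((-(1:ℂ)/48)•w) * u) + τ ((((1:ℂ)/2)•u) * (((1:ℂ)/6)•w))
      + τ ((((1:ℂ)/8)•v) * (((1:ℂ)/2)•v)) + τ ((((1:ℂ)/48)•w) * u)
      + τ ((((1:ℂ)/2)•u) * (((1:ℂ)/2)•v) * (-f)) + τ ((((1:ℂ)/8)•v) * u * (-f))
      + τ ((((1:ℂ)/2)•u) * u * (((1:ℂ)/2)•(f*f)))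
    = (1/8) * τ (f * f * u * u - f * u * (f * u)) := by
  subst hv
  have eP : τ (u*(f*(u*f))) = τ (f*(u*(f*u))) := by
    rw [hτ u (f*(u*f))]; simp only [mul_assoc]
  have eQ1 : τ (u*(f*(f*u))) = τ (f*(f*(u*u))) := by
    rw [hτ u (f*(f*u))]; simp only [mul_assoc]
  have eQ3 : τ (u*(u*(f*f))) = τ (f*(f*(u*u))) := by
    rw [hτ u (u*(f*f))]; simp only [mul_assoc]; exact eQ1
  have eQ2 : τ (f*(u*(u*f))) = τ (f*(f*(u*u))) := by
    rw [hτ f (u*(u*f))]; simp only [mul_assoc]; exact eQ3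
  simp only [mul_add, add_mul, mul_neg, neg_mul, smul_mul_assoc, mul_smul_comm, smul_smul,
    smul_add, map_add, map_sub, map_smul, map_neg, smul_eq_mul, mul_assoc]
  rw [eP, eQ1, eQ2, eQ3]
  ring

private lemma gb_arith (K E' : ℝ) (hK : 0 ≤ K) (hE : 0 < E') :
    K*(E'/(8*(K+1))) < E'/8 := by
  have h8 : (0:ℝ) < 8*(K+1) := by linarith
  have e : K*(E'/(8*(K+1))) = (K*E')/(8*(K+1)) := by ring
  rw [e, div_lt_div_iff₀ h8 (by norm_num : (0:ℝ) < 8)]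
  nlinarith

theorem stmt_18 {A : Type*} [NormedRing A] [StarRing A] [CStarRing A]
    [NormedAlgebra ℂ A] [CompleteSpace A] [StarModule ℂ A]
    (τ : A →L[ℂ] ℂ) (hτ : ∀ x y : A, τ (x * y) = τ (y * x))
    (D : A →L[ℂ] A) (hD : ∀ x y : A, D (x * y) = D x * y + x * D y)
    (f : A) (hf : IsSelfAdjoint f)
    (hne : τ (f * f * D f * D f - f * D f * (f * D f)) ≠ 0) :
    ∃ δ : ℝ, 0 < δ ∧ ∀ t : ℝ, 0 < |t| → |t| < δ →
      (1/2 : ℂ) * τ (D (exp ((-(t : ℂ)/2) • f)) * D (exp ((t : ℂ) • f))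
        + D (exp (((t : ℂ)/2) • f)) * D (exp ((t : ℂ) • f)) * exp ((-(t : ℂ)) • f))
        ≠ 0 := by
  obtain ⟨C, hC0, hCb⟩ := gb_tail_bound f
  set u := D f with hu
  set v := D (f*f) with hv0
  set w := D (f*f*f) with hw0
  have hD1 : D (1:A) = 0 := by
    have h := hD 1 1
    simp only [one_mul, mul_one] at h
    exact (left_eq_add.mp h)
  have hv : v = u*f + f*u := by rw [hv0, hu]; exact hD f f
  -- coefficient elements
  set a1 : A := (-(1:ℂ)/2)•u with ha1
  set a2 : A := ((1:ℂ)/8)•v with ha2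
  set a3 : A := (-(1:ℂ)/48)•w with ha3
  set b2 : A := ((1:ℂ)/2)•v with hb2
  set b3 : A := ((1:ℂ)/6)•w with hb3
  set g1 : A := ((1:ℂ)/2)•u with hg1
  set g3 : A := ((1:ℂ)/48)•w with hg3
  set h1 : A := -f with hh1
  set h2 : A := ((1:ℂ)/2)•(f*f) with hh2
  set h3 : A := (-(1:ℂ)/6)•(f*f*f) with hh3
  set E : ℂ := τ (f * f * u * u - f * u * (f * u)) with hE
  -- the remainder coefficients
  set φ3 : ℂ := τ (a2*b3) + τ (a3*b2) + τ (a2*b3) + τ (g3*b2) + τ (g1*b3*h1) + τ (a2*b2*h1)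
      + τ (g3*u*h1) + τ (g1*b2*h2) + τ (a2*u*h2) + τ (g1*u*h3) with hφ3
  set φ4 : ℂ := τ (a3*b3) + τ (g3*b3) + τ (a2*b3*h1) + τ (g3*b2*h1) + τ (g1*b3*h2)
      + τ (a2*b2*h2) + τ (g3*u*h2) + τ (g1*b2*h3) + τ (a2*u*h3) with hφ4
  set φ5 : ℂ := τ (g3*b3*h1) + τ (a2*b3*h2) + τ (g3*b2*h2) + τ (g1*b3*h3) + τ (a2*b2*h3)
      + τ (g3*u*h3) with hφ5
  set φ6 : ℂ := τ (g3*b3*h2) + τ (a2*b3*h3) + τ (g3*b2*h3) with hφ6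
  set φ7 : ℂ := τ (g3*b3*h3) with hφ7
  -- constants
  set Cd : ℝ := ‖D‖ * C with hCd
  have hCd0 : 0 ≤ Cd := mul_nonneg (norm_nonneg _) hC0
  set Ma : ℝ := ‖a1‖ + ‖a2‖ + ‖a3‖ with hMa
  set Mb : ℝ := ‖u‖ + ‖b2‖ + ‖b3‖ with hMb
  set Mg : ℝ := ‖g1‖ + ‖a2‖ + ‖g3‖ with hMg
  set Mh : ℝ := ‖(1:A)‖ + ‖h1‖ + ‖h2‖ + ‖h3‖ with hMh
  have hMa0 : 0 ≤ Ma := add_nonneg (add_nonneg (norm_nonneg _) (norm_nonneg _)) (norm_nonneg _)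
  have hMb0 : 0 ≤ Mb := add_nonneg (add_nonneg (norm_nonneg _) (norm_nonneg _)) (norm_nonneg _)
  have hMg0 : 0 ≤ Mg := add_nonneg (add_nonneg (norm_nonneg _) (norm_nonneg _)) (norm_nonneg _)
  have hMh0 : 0 ≤ Mh := add_nonneg (add_nonneg (add_nonneg (norm_nonneg _) (norm_nonneg _)) (norm_nonneg _)) (norm_nonneg _)
  set K1 : ℝ := Cd*Mb + Ma*Cd + Cd*Cd with hK1
  set K2 : ℝ := Cd*Mb + Mg*Cd + Cd*Cd with hK2
  set K3 : ℝ := K2*Mh + Mg*Mb*C + K2*C with hK3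
  have hK10 : 0 ≤ K1 := add_nonneg (add_nonneg (mul_nonneg hCd0 hMb0) (mul_nonneg hMa0 hCd0)) (mul_nonneg hCd0 hCd0)
  have hK20 : 0 ≤ K2 := add_nonneg (add_nonneg (mul_nonneg hCd0 hMb0) (mul_nonneg hMg0 hCd0)) (mul_nonneg hCd0 hCd0)
  have hK30 : 0 ≤ K3 := add_nonneg (add_nonneg (mul_nonneg hK20 hMh0) (mul_nonneg (mul_nonneg hMg0 hMb0) hC0)) (mul_nonneg hK20 hC0)
  set Kψ : ℝ := ‖φ3‖ + ‖φ4‖ + ‖φ5‖ + ‖φ6‖ + ‖φ7‖ with hKψ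
  have hKψ0 : 0 ≤ Kψ := add_nonneg (add_nonneg (add_nonneg (add_nonneg (norm_nonneg _) (norm_nonneg _)) (norm_nonneg _)) (norm_nonneg _)) (norm_nonneg _)
  set K : ℝ := ‖τ‖*(K1+K3) + Kψ with hK
  have hK0 : 0 ≤ K := add_nonneg (mul_nonneg (norm_nonneg _) (add_nonneg hK10 hK30)) hKψ0
  have hEpos : 0 < ‖E‖ := norm_pos_iff.mpr hne
  -- D-exponential approximation
  have hDexp : ∀ s : ℂ, ‖s‖ ≤ 1 →
      ‖D (exp (s•f)) - (s•u + (s^2/2)•v + (s^3/6)•w)‖ ≤ Cd * ‖s‖^4 := by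
    intro s hs
    have heq : D (exp (s•f)) - (s•u + (s^2/2)•v + (s^3/6)•w)
        = D (exp (s•f) - (1 + s•f + (s^2/2)•(f*f) + (s^3/6)•(f*f*f))) := by
      rw [map_sub, map_add, map_add, map_add, map_smul, map_smul, map_smul, hD1,
        hu, hv0, hw0]
      abel
    rw [heq, hCd]
    calc ‖D (exp (s•f) - (1 + s•f + (s^2/2)•(f*f) + (s^3/6)•(f*f*f)))‖
        ≤ ‖D‖ * ‖exp (s•f) - (1 + s•f + (s^2/2)•(f*f) + (s^3/6)•(f*f*f))‖ := D.le_opNorm _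
      _ ≤ ‖D‖ * (C * ‖s‖^4) := mul_le_mul_of_nonneg_left (hCb s hs) (norm_nonneg _)
      _ = (‖D‖*C) * ‖s‖^4 := by ring
  refine ⟨min 1 (‖E‖/(8*(K+1))), lt_min one_pos (div_pos hEpos (by linarith)), fun t ht htδ => ?_⟩
  -- per-t work
  set z : ℂ := (t : ℂ) with hzdef
  have hnz : ‖z‖ = |t| := by rw [hzdef]; exact Complex.norm_real t
  have hz1 : ‖z‖ ≤ 1 := by rw [hnz]; exact (htδ.trans_le (min_le_left _ _)).le
  have ht2 : |t| < ‖E‖/(8*(K+1)) := htδ.trans_le (min_le_right _ _)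
  have hsAeq : ‖-z/2‖ = ‖z‖/2 := by rw [norm_div, norm_neg]; norm_num
  have hsA : ‖-z/2‖ ≤ ‖z‖ := by rw [hsAeq]; linarith [norm_nonneg z]
  have hsA1 : ‖-z/2‖ ≤ 1 := hsA.trans hz1
  have hsGeq : ‖z/2‖ = ‖z‖/2 := by rw [norm_div]; norm_num
  have hsG : ‖z/2‖ ≤ ‖z‖ := by rw [hsGeq]; linarith [norm_nonneg z]
  have hsG1 : ‖z/2‖ ≤ 1 := hsG.trans hz1
  have hsA4 : ‖-z/2‖^4 ≤ ‖z‖^4 := pow_le_pow_left₀ (norm_nonneg _) hsA 4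
  have hsG4 : ‖z/2‖^4 ≤ ‖z‖^4 := pow_le_pow_left₀ (norm_nonneg _) hsG 4
  -- polynomial equalities
  have pA_eq : (-z/2)•u + ((-z/2)^2/2)•v + ((-z/2)^3/6)•w = z•(a1 + z•a2 + z^2•a3) := by
    rw [ha1, ha2, ha3]; module
  have pB_eq : z•u + (z^2/2)•v + (z^3/6)•w = z•(u + z•b2 + z^2•b3) := by
    rw [hb2, hb3]; module
  have pG_eq : (z/2)•u + ((z/2)^2/2)•v + ((z/2)^3/6)•w = z•(g1 + z•a2 + z^2•g3) := by
    rw [hg1, ha2, hg3]; module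
  have pH_eq : (1:A) + (-z)•f + ((-z)^2/2)•(f*f) + ((-z)^3/6)•(f*f*f)
      = (1:A) + z•h1 + z^2•h2 + z^3•h3 := by
    rw [hh1, hh2, hh3]; module
  -- approximations
  have hEA : ‖D (exp ((-z/2)•f)) - z•(a1 + z•a2 + z^2•a3)‖ ≤ Cd*‖z‖^4 := by
    have h := hDexp (-z/2) hsA1
    rw [pA_eq] at h
    exact h.trans (mul_le_mul_of_nonneg_left hsA4 hCd0)
  have hEB : ‖D (exp (z•f)) - z•(u + z•b2 + z^2•b3)‖ ≤ Cd*‖z‖^4 := by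
    have h := hDexp z hz1
    rw [pB_eq] at h
    exact h
  have hEG : ‖D (exp ((z/2)•f)) - z•(g1 + z•a2 + z^2•g3)‖ ≤ Cd*‖z‖^4 := by
    have h := hDexp (z/2) hsG1
    rw [pG_eq] at h
    exact h.trans (mul_le_mul_of_nonneg_left hsG4 hCd0)
  have hEH : ‖exp ((-z)•f) - ((1:A) + z•h1 + z^2•h2 + z^3•h3)‖ ≤ C*‖z‖^4 := by
    have h := hCb (-z) (by rw [norm_neg]; exact hz1)
    rw [norm_neg] at h
    calc ‖exp ((-z)•f) - ((1:A) + z•h1 + z^2•h2 + z^3•h3)‖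
        = ‖exp ((-z)•f) - ((1:A) + (-z)•f + ((-z)^2/2)•(f*f) + ((-z)^3/6)•(f*f*f))‖ := by
          rw [pH_eq]
      _ ≤ C*‖z‖^4 := h
  -- norms of polynomial parts
  have hPA : ‖z•(a1 + z•a2 + z^2•a3)‖ ≤ ‖z‖*Ma := by
    rw [norm_smul]
    exact mul_le_mul_of_nonneg_left (gb_poly3_bound a1 a2 a3 z hz1) (norm_nonneg z)
  have hPB : ‖z•(u + z•b2 + z^2•b3)‖ ≤ ‖z‖*Mb := by
    rw [norm_smul]
    exact mul_le_mul_of_nonneg_left (gb_poly3_bound u b2 b3 z hz1) (norm_nonneg z)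
  have hPG : ‖z•(g1 + z•a2 + z^2•g3)‖ ≤ ‖z‖*Mg := by
    rw [norm_smul]
    exact mul_le_mul_of_nonneg_left (gb_poly3_bound g1 a2 g3 z hz1) (norm_nonneg z)
  have hPH : ‖(1:A) + z•h1 + z^2•h2 + z^3•h3‖ ≤ Mh := gb_poly4_bound 1 h1 h2 h3 z hz1
  -- power comparisons
  have h85 : ‖z‖^8 ≤ ‖z‖^5 := pow_le_pow_of_le_one (norm_nonneg z) hz1 (by norm_num)
  have h65 : ‖z‖^6 ≤ ‖z‖^5 := pow_le_pow_of_le_one (norm_nonneg z) hz1 (by norm_num)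
  have h95 : ‖z‖^9 ≤ ‖z‖^5 := pow_le_pow_of_le_one (norm_nonneg z) hz1 (by norm_num)
  -- product A*B
  have hABmul : (z•(a1 + z•a2 + z^2•a3)) * (z•(u + z•b2 + z^2•b3))
      = z^2 • ((a1 + z•a2 + z^2•a3) * (u + z•b2 + z^2•b3)) := by
    rw [smul_mul_assoc, mul_smul_comm, smul_smul, ← pow_two]
  have hAB : ‖D (exp ((-z/2)•f)) * D (exp (z•f))
      - z^2 • ((a1 + z•a2 + z^2•a3) * (u + z•b2 + z^2•b3))‖ ≤ K1*‖z‖^5 := by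
    rw [← hABmul]
    refine (gb_prod_approx _ _ _ _ (Cd*‖z‖^4) (Cd*‖z‖^4) (‖z‖*Ma) (‖z‖*Mb)
      hEA hEB hPA hPB).trans ?_
    calc Cd*‖z‖^4*(‖z‖*Mb) + (‖z‖*Ma)*(Cd*‖z‖^4) + (Cd*‖z‖^4)*(Cd*‖z‖^4)
        = (Cd*Mb + Ma*Cd)*‖z‖^5 + (Cd*Cd)*‖z‖^8 := by ring
      _ ≤ (Cd*Mb + Ma*Cd)*‖z‖^5 + (Cd*Cd)*‖z‖^5 :=
          add_le_add_right (mul_le_mul_of_nonneg_left h85 (mul_nonneg hCd0 hCd0)) _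
      _ = K1*‖z‖^5 := by rw [hK1]; ring
  -- product G*B
  have hGBmul : (z•(g1 + z•a2 + z^2•g3)) * (z•(u + z•b2 + z^2•b3))
      = z^2 • ((g1 + z•a2 + z^2•g3) * (u + z•b2 + z^2•b3)) := by
    rw [smul_mul_assoc, mul_smul_comm, smul_smul, ← pow_two]
  have hGB : ‖D (exp ((z/2)•f)) * D (exp (z•f))
      - z^2 • ((g1 + z•a2 + z^2•g3) * (u + z•b2 + z^2•b3))‖ ≤ K2*‖z‖^5 := by
    rw [← hGBmul]
    refine (gb_prod_approx _ _ _ _ (Cd*‖z‖^4) (Cd*‖z‖^4) (‖z‖*Mg) (‖z‖*Mb)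
      hEG hEB hPG hPB).trans ?_
    calc Cd*‖z‖^4*(‖z‖*Mb) + (‖z‖*Mg)*(Cd*‖z‖^4) + (Cd*‖z‖^4)*(Cd*‖z‖^4)
        = (Cd*Mb + Mg*Cd)*‖z‖^5 + (Cd*Cd)*‖z‖^8 := by ring
      _ ≤ (Cd*Mb + Mg*Cd)*‖z‖^5 + (Cd*Cd)*‖z‖^5 :=
          add_le_add_right (mul_le_mul_of_nonneg_left h85 (mul_nonneg hCd0 hCd0)) _
      _ = K2*‖z‖^5 := by rw [hK2]; ring
  -- triple product
  have hQGBn : ‖z^2 • ((g1 + z•a2 + z^2•g3) * (u + z•b2 + z^2•b3))‖ ≤ (Mg*Mb)*‖z‖^2 := by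
    rw [norm_smul, norm_pow]
    calc ‖z‖^2 * ‖(g1 + z•a2 + z^2•g3) * (u + z•b2 + z^2•b3)‖
        ≤ ‖z‖^2 * (Mg*Mb) := by
          refine mul_le_mul_of_nonneg_left ?_ (by positivity)
          exact (norm_mul_le _ _).trans (mul_le_mul (gb_poly3_bound _ _ _ z hz1)
            (gb_poly3_bound _ _ _ z hz1) (norm_nonneg _) hMg0)
      _ = (Mg*Mb)*‖z‖^2 := by ring
  have hGBH : ‖D (exp ((z/2)•f)) * D (exp (z•f)) * exp ((-z)•f)
      - (z^2 • ((g1 + z•a2 + z^2•g3) * (u + z•b2 + z^2•b3)))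
          * ((1:A) + z•h1 + z^2•h2 + z^3•h3)‖ ≤ K3*‖z‖^5 := by
    refine (gb_prod_approx _ _ _ _ (K2*‖z‖^5) (C*‖z‖^4) ((Mg*Mb)*‖z‖^2) Mh
      hGB hEH hQGBn hPH).trans ?_
    calc K2*‖z‖^5*Mh + ((Mg*Mb)*‖z‖^2)*(C*‖z‖^4) + (K2*‖z‖^5)*(C*‖z‖^4)
        = (K2*Mh)*‖z‖^5 + (Mg*Mb*C)*‖z‖^6 + (K2*C)*‖z‖^9 := by ring
      _ ≤ (K2*Mh)*‖z‖^5 + (Mg*Mb*C)*‖z‖^5 + (K2*C)*‖z‖^5 := by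
          refine add_le_add (add_le_add_right
            (mul_le_mul_of_nonneg_left h65 (mul_nonneg (mul_nonneg hMg0 hMb0) hC0)) _)
            (mul_le_mul_of_nonneg_left h95 (mul_nonneg hK20 hC0))
      _ = K3*‖z‖^5 := by rw [hK3]; ring
  -- sum
  have hW : ‖(D (exp ((-z/2)•f)) * D (exp (z•f))
        + D (exp ((z/2)•f)) * D (exp (z•f)) * exp ((-z)•f))
      - (z^2 • ((a1 + z•a2 + z^2•a3) * (u + z•b2 + z^2•b3))
        + (z^2 • ((g1 + z•a2 + z^2•g3) * (u + z•b2 + z^2•b3)))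
            * ((1:A) + z•h1 + z^2•h2 + z^3•h3))‖ ≤ (K1+K3)*‖z‖^5 := by
    have e : (D (exp ((-z/2)•f)) * D (exp (z•f))
        + D (exp ((z/2)•f)) * D (exp (z•f)) * exp ((-z)•f))
      - (z^2 • ((a1 + z•a2 + z^2•a3) * (u + z•b2 + z^2•b3))
        + (z^2 • ((g1 + z•a2 + z^2•g3) * (u + z•b2 + z^2•b3)))
            * ((1:A) + z•h1 + z^2•h2 + z^3•h3))
      = (D (exp ((-z/2)•f)) * D (exp (z•f))
          - z^2 • ((a1 + z•a2 + z^2•a3) * (u + z•b2 + z^2•b3)))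
        + (D (exp ((z/2)•f)) * D (exp (z•f)) * exp ((-z)•f)
          - (z^2 • ((g1 + z•a2 + z^2•g3) * (u + z•b2 + z^2•b3)))
              * ((1:A) + z•h1 + z^2•h2 + z^3•h3)) := by abel
    rw [e]
    calc ‖_ + _‖ ≤ _ := norm_add_le _ _
      _ ≤ K1*‖z‖^5 + K3*‖z‖^5 := add_le_add hAB hGBH
      _ = (K1+K3)*‖z‖^5 := by ring
  -- apply τ
  have hτW : ‖τ (D (exp ((-z/2)•f)) * D (exp (z•f))
        + D (exp ((z/2)•f)) * D (exp (z•f)) * exp ((-z)•f))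
      - τ (z^2 • ((a1 + z•a2 + z^2•a3) * (u + z•b2 + z^2•b3))
        + (z^2 • ((g1 + z•a2 + z^2•g3) * (u + z•b2 + z^2•b3)))
            * ((1:A) + z•h1 + z^2•h2 + z^3•h3))‖ ≤ ‖τ‖*((K1+K3)*‖z‖^5) := by
    rw [← map_sub]
    exact (τ.le_opNorm _).trans (mul_le_mul_of_nonneg_left hW (norm_nonneg _))
  -- polynomial identity value
  have hpoly := gb_poly_id τ a1 a2 a3 u b2 b3 g1 a2 g3 h1 h2 h3 z
  have hc0 : τ (a1*u) + τ (g1*u) = 0 := by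
    have hz0 : a1*u + g1*u = 0 := by
      rw [ha1, hg1, smul_mul_assoc, smul_mul_assoc]; module
    rw [← map_add, hz0, map_zero]
  have hc1 : τ (a1*b2) + τ (a2*u) + τ (g1*b2) + τ (a2*u) + τ (g1*u*h1) = 0 := by
    rw [ha1, ha2, hb2, hg1, hh1]
    exact gb_phi1_zero τ hτ f u v hv
  have hc2 : τ (a1*b3) + τ (a2*b2) + τ (a3*u) + τ (g1*b3) + τ (a2*b2) + τ (g3*u)
      + τ (g1*b2*h1) + τ (a2*u*h1) + τ (g1*u*h2) = (1/8) * E := by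
    rw [ha1, ha2, ha3, hb2, hb3, hg1, hg3, hh1, hh2, hE]
    exact gb_phi2_val τ hτ f u v w hv
  rw [hc0, hc1, hc2, ← hφ3, ← hφ4, ← hφ5, ← hφ6, ← hφ7] at hpoly
  -- remainder bound
  have hψ : ‖φ3 + φ4*z + φ5*z^2 + φ6*z^3 + φ7*z^4‖ ≤ Kψ := by
    have n4 : ‖φ4*z‖ ≤ ‖φ4‖ := by
      rw [norm_mul]; exact mul_le_of_le_one_right (norm_nonneg _) hz1
    have n5 : ‖φ5*z^2‖ ≤ ‖φ5‖ := by
      rw [norm_mul, norm_pow]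
      exact mul_le_of_le_one_right (norm_nonneg _) (pow_le_one₀ (norm_nonneg _) hz1)
    have n6 : ‖φ6*z^3‖ ≤ ‖φ6‖ := by
      rw [norm_mul, norm_pow]
      exact mul_le_of_le_one_right (norm_nonneg _) (pow_le_one₀ (norm_nonneg _) hz1)
    have n7 : ‖φ7*z^4‖ ≤ ‖φ7‖ := by
      rw [norm_mul, norm_pow]
      exact mul_le_of_le_one_right (norm_nonneg _) (pow_le_one₀ (norm_nonneg _) hz1)
    have t1 := norm_add_le (φ3 + φ4*z + φ5*z^2 + φ6*z^3) (φ7*z^4)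
    have t2 := norm_add_le (φ3 + φ4*z + φ5*z^2) (φ6*z^3)
    have t3 := norm_add_le (φ3 + φ4*z) (φ5*z^2)
    have t4 := norm_add_le φ3 (φ4*z)
    rw [hKψ]; linarith
  have hPWval : τ (z^2 • ((a1 + z•a2 + z^2•a3) * (u + z•b2 + z^2•b3))
        + (z^2 • ((g1 + z•a2 + z^2•g3) * (u + z•b2 + z^2•b3)))
            * ((1:A) + z•h1 + z^2•h2 + z^3•h3)) - ((1/8)*E)*z^4
      = z^5*(φ3 + φ4*z + φ5*z^2 + φ6*z^3 + φ7*z^4) := by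
    rw [hpoly]; ring
  -- combine
  have hfinal : ‖τ (D (exp ((-z/2)•f)) * D (exp (z•f))
        + D (exp ((z/2)•f)) * D (exp (z•f)) * exp ((-z)•f)) - ((1/8)*E)*z^4‖
      ≤ K*|t|^5 := by
    have split : τ (D (exp ((-z/2)•f)) * D (exp (z•f))
          + D (exp ((z/2)•f)) * D (exp (z•f)) * exp ((-z)•f)) - ((1/8)*E)*z^4
        = (τ (D (exp ((-z/2)•f)) * D (exp (z•f))
            + D (exp ((z/2)•f)) * D (exp (z•f)) * exp ((-z)•f))
          - τ (z^2 • ((a1 + z•a2 + z^2•a3) * (u + z•b2 + z^2•b3))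
            + (z^2 • ((g1 + z•a2 + z^2•g3) * (u + z•b2 + z^2•b3)))
                * ((1:A) + z•h1 + z^2•h2 + z^3•h3)))
          + (τ (z^2 • ((a1 + z•a2 + z^2•a3) * (u + z•b2 + z^2•b3))
            + (z^2 • ((g1 + z•a2 + z^2•g3) * (u + z•b2 + z^2•b3)))
                * ((1:A) + z•h1 + z^2•h2 + z^3•h3)) - ((1/8)*E)*z^4) := by ring
    rw [split]
    calc ‖_ + _‖ ≤ _ := norm_add_le _ _
      _ ≤ ‖τ‖*((K1+K3)*‖z‖^5) + ‖z‖^5*Kψ := by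
          refine add_le_add hτW ?_
          rw [hPWval, norm_mul, norm_pow]
          exact mul_le_mul_of_nonneg_left hψ (by positivity)
      _ = (‖τ‖*(K1+K3) + Kψ)*‖z‖^5 := by ring
      _ = K*|t|^5 := by rw [hK, hnz]
  -- endgame
  clear_value K E
  have hlow : ‖((1/8:ℂ)*E)*z^4‖ = (‖E‖/8)*|t|^4 := by
    have h18 : ‖(1/8 : ℂ)‖ = 1/8 := by norm_num
    rw [norm_mul, norm_mul, norm_pow, hnz, h18]
    ring
  have hKt : K*|t| < ‖E‖/8 :=
    (mul_le_mul_of_nonneg_left ht2.le hK0).trans_lt (gb_arith K ‖E‖ hK0 hEpos)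
  have h4pos : 0 < |t|^4 := pow_pos ht 4
  have hsub := norm_sub_norm_le (((1/8:ℂ)*E)*z^4)
    (τ (D (exp ((-z/2)•f)) * D (exp (z•f))
        + D (exp ((z/2)•f)) * D (exp (z•f)) * exp ((-z)•f)))
  rw [norm_sub_rev] at hsub
  have hlt : K*|t|^5 < (‖E‖/8)*|t|^4 := by
    have e : K*|t|^5 = (K*|t|)*|t|^4 := by ring
    rw [e]
    exact mul_lt_mul_of_pos_right hKt h4pos
  have hpos : 0 < ‖τ (D (exp ((-z/2)•f)) * D (exp (z•f))
      + D (exp ((z/2)•f)) * D (exp (z•f)) * exp ((-z)•f))‖ := by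
    rw [hlow] at hsub
    linarith only [hfinal, hsub, hlt]
  exact mul_ne_zero (by norm_num) (norm_pos_iff.mp hpos)
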